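/- Fix d ≥ 1, λ ∈ ℝ, and z with |z| < 1/√d. Define F_{0,d}(λ) = 1 and for n ≥ 1, F_{n,d}(λ) = (√d^n / Γ(n)) [e^{λ²/(2d)} Γ(n, λ²/d) + 2^{n-1} (λ²/(2d))^{n/2} γ(n/2, λ²/(2d))]. Then Σ_{n=0}^∞ F_{n,d}(λ) zⁿ = 1 + (z√d/(1 - z√d)) e^{-λ²(1-2z√d)/(2d)} + (√π/√2) z|λ| e^{z²λ²/2} [erf(z|λ|/√2) + erf((1 - z√d)|λ|/√(2d))]. -/

import Mathlib

open MeasureTheory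

/-- `F_{n,d}(λ)`: `F_{0,d} = 1` and for `n ≥ 1`,
`F_{n,d}(λ) = (√d^n/Γ(n))[e^{λ²/(2d)} Γ(n, λ²/d) + 2^{n-1}(λ²/(2d))^{n/2} γ(n/2, λ²/(2d))]`,
where `Γ(·,·)` and `γ(·,·)` are the upper and lower incomplete gamma functions. -/
noncomputable def Fnd (d n : ℕ) (l : ℝ) : ℝ :=
  if n = 0 then 1
  else
    Real.sqrt d ^ n / Real.Gamma n *
      (Real.exp (l ^ 2 / (2 * d)) *
          (∫ t in Set.Ioi (l ^ 2 / (d : ℝ)), t ^ ((n : ℝ) - 1) * Real.exp (-t)) +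
        2 ^ (n - 1) * (l ^ 2 / (2 * d)) ^ ((n : ℝ) / 2) *
          (∫ t in (0:ℝ)..(l ^ 2 / (2 * d)), t ^ ((n : ℝ) / 2 - 1) * Real.exp (-t)))

/-- The error function `erf(x) = (2/√π) ∫_0^x e^{-t²} dt`. -/
noncomputable def myErf (x : ℝ) : ℝ := 2 / Real.sqrt Real.pi * ∫ t in (0:ℝ)..x, Real.exp (-t ^ 2)

open Set

lemma expTsum (x : ℝ) : ∑' n : ℕ, x ^ n / (Nat.factorial n : ℝ) = Real.exp x := by
  rw [Real.exp_eq_exp_ℝ, NormedSpace.exp_eq_tsum_div]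

lemma integrableOn_pow_exp (m : ℕ) :
    IntegrableOn (fun t : ℝ => t ^ m * Real.exp (-t)) (Ioi 0) := by
  have h := Real.GammaIntegral_convergent (s := (m : ℝ) + 1) (by positivity)
  refine h.congr_fun ?_ measurableSet_Ioi
  intro x _
  dsimp only
  rw [add_sub_cancel_right, Real.rpow_natCast, mul_comm]

lemma integral_pow_exp_Ioi_zero (m : ℕ) :
    ∫ t in Ioi (0:ℝ), t ^ m * Real.exp (-t) = (Nat.factorial m : ℝ) := by
  have h := Real.Gamma_eq_integral (s := (m : ℝ) + 1) (by positivity)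
  have h2 : Real.Gamma ((m : ℝ) + 1) = (Nat.factorial m : ℝ) := Real.Gamma_nat_eq_factorial m
  rw [← h2, h]
  refine setIntegral_congr_fun measurableSet_Ioi ?_
  intro x _
  dsimp only
  rw [add_sub_cancel_right, Real.rpow_natCast, mul_comm]

lemma sum1 {w : ℝ} (hw : |w| < 1) {b : ℝ} (hb : 0 ≤ b) :
    HasSum (fun m : ℕ => w ^ (m+1) / (Nat.factorial m : ℝ) * ∫ t in Ioi b, t ^ m * Real.exp (-t))
      (w / (1 - w) * Real.exp (-((1 - w) * b))) := by
  have h1w : 0 < 1 - w := by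
    have := abs_lt.1 hw
    linarith [this.2]
  set F : ℕ → ℝ → ℝ := fun m t => w ^ (m+1) / (Nat.factorial m : ℝ) * (t ^ m * Real.exp (-t))
    with hF
  have hint : ∀ m : ℕ, Integrable (F m) (volume.restrict (Ioi b)) := by
    intro m
    exact (((integrableOn_pow_exp m).mono_set (Ioi_subset_Ioi hb)).const_mul _)
  have hbound : ∀ m : ℕ, (∫ t in Ioi b, ‖F m t‖) ≤ |w| ^ (m+1) := by
    intro m
    have hle : (∫ t in Ioi b, ‖F m t‖)
        ≤ |w| ^ (m+1) / (Nat.factorial m : ℝ) * ∫ t in Ioi b, t ^ m * Real.exp (-t) := by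
      rw [← integral_const_mul]
      refine setIntegral_mono_on ((hint m).norm) (((integrableOn_pow_exp m).mono_set
        (Ioi_subset_Ioi hb)).const_mul _) measurableSet_Ioi ?_
      intro t ht
      have ht0 : 0 < t := lt_of_le_of_lt hb ht
      rw [hF]
      dsimp only
      rw [norm_mul, norm_mul, norm_div]
      simp only [norm_pow, Real.norm_eq_abs, abs_pow]
      rw [abs_of_pos ht0, abs_of_pos (Real.exp_pos _), Nat.abs_cast]
    refine hle.trans ?_
    have h2 : (∫ t in Ioi b, t ^ m * Real.exp (-t)) ≤ (Nat.factorial m : ℝ) := by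
      rw [← integral_pow_exp_Ioi_zero m]
      apply setIntegral_mono_set (integrableOn_pow_exp m)
      · filter_upwards [ae_restrict_mem measurableSet_Ioi] with t ht
        have ht0 : (0:ℝ) ≤ t := le_of_lt (mem_Ioi.1 ht)
        positivity
      · exact HasSubset.Subset.eventuallyLE (Ioi_subset_Ioi hb)
    have hfac : (0:ℝ) < (Nat.factorial m : ℝ) := by positivity
    rw [div_mul_eq_mul_div, div_le_iff₀ hfac]
    calc |w| ^ (m+1) * (∫ t in Ioi b, t ^ m * Real.exp (-t))
        ≤ |w| ^ (m+1) * (Nat.factorial m : ℝ) := by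
          exact mul_le_mul_of_nonneg_left h2 (by positivity)
      _ = _ := rfl
  have hsum : Summable fun m : ℕ => ∫ t in Ioi b, ‖F m t‖ := by
    refine Summable.of_nonneg_of_le (fun m => ?_) hbound ?_
    · exact integral_nonneg fun t => norm_nonneg _
    · exact (summable_geometric_of_lt_one (abs_nonneg w) hw).mul_left |w|
      |>.congr (fun m => by rw [pow_succ, mul_comm])
  have hkey := hasSum_integral_of_summable_integral_norm hint hsum
  have htsum : ∀ t ∈ Ioi b, (∑' m : ℕ, F m t) = w * Real.exp (-((1 - w) * t)) := by
    intro t _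
    have : ∀ m : ℕ, F m t = w * Real.exp (-t) * ((w * t) ^ m / (Nat.factorial m : ℝ)) := by
      intro m
      rw [hF]
      dsimp only
      rw [mul_pow, pow_succ]
      ring
    rw [tsum_congr this, tsum_mul_left, expTsum, mul_assoc, ← Real.exp_add]
    ring_nf
  have hval : (∫ t in Ioi b, ∑' m : ℕ, F m t) = w / (1 - w) * Real.exp (-((1 - w) * b)) := by
    rw [setIntegral_congr_fun measurableSet_Ioi htsum]
    have : (fun t : ℝ => w * Real.exp (-((1 - w) * t)))
        = fun t : ℝ => w * Real.exp (-((1 - w) * t)) := rfl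
    rw [integral_const_mul]
    have hcomp : (∫ t in Ioi b, Real.exp (-((1 - w) * t)))
        = (1 - w)⁻¹ * Real.exp (-((1 - w) * b)) := by
      have := MeasureTheory.integral_comp_mul_left_Ioi (fun x => Real.exp (-x)) b h1w
      simp only [smul_eq_mul] at this
      rw [this, integral_exp_neg_Ioi]
    rw [hcomp]
    ring
  rw [← hval]
  exact hkey.congr_fun (fun m => by rw [hF, integral_const_mul])

lemma image_sq_Ioc {a : ℝ} (ha : 0 ≤ a) :
    (fun u : ℝ => u ^ 2) '' Ioc 0 (Real.sqrt a) = Ioc 0 a := by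
  ext x
  constructor
  · rintro ⟨u, ⟨hu0, hur⟩, rfl⟩
    constructor
    · positivity
    · calc u ^ 2 ≤ Real.sqrt a ^ 2 := by
            exact pow_le_pow_left₀ (le_of_lt hu0) hur 2
        _ = a := Real.sq_sqrt ha
  · rintro ⟨hx0, hxa⟩
    refine ⟨Real.sqrt x, ⟨Real.sqrt_pos.2 hx0, Real.sqrt_le_sqrt hxa⟩, Real.sq_sqrt hx0.le⟩

lemma subst_sq {a : ℝ} (ha : 0 ≤ a) (m : ℕ) :
    (∫ t in (0:ℝ)..a, t ^ (((m:ℝ) + 1) / 2 - 1) * Real.exp (-t))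
      = 2 * ∫ u in (0:ℝ)..(Real.sqrt a), u ^ m * Real.exp (-u ^ 2) := by
  have hr : (0:ℝ) ≤ Real.sqrt a := Real.sqrt_nonneg a
  rw [intervalIntegral.integral_of_le ha, intervalIntegral.integral_of_le hr,
    ← integral_const_mul]
  rw [← image_sq_Ioc ha]
  rw [integral_image_eq_integral_abs_deriv_smul (f' := fun u : ℝ => 2 * u) measurableSet_Ioc
    (fun u _ => (by simpa using hasDerivAt_pow 2 u : HasDerivAt (fun u : ℝ => u ^ 2) (2 * u) u).hasDerivWithinAt)
    (fun x hx y hy h => by nlinarith [hx.1, hy.1])]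
  refine setIntegral_congr_fun measurableSet_Ioc ?_
  intro u hu
  have hu0 : 0 < u := hu.1
  have h1 : |(2:ℝ) * u| = 2 * u := abs_of_pos (by positivity)
  dsimp only
  rw [smul_eq_mul, h1]
  have h2 : (u ^ 2) ^ (((m:ℝ) + 1) / 2 - 1) = u ^ ((m:ℝ) - 1) := by
    rw [← Real.rpow_natCast u 2, ← Real.rpow_mul hu0.le]
    congr 1
    push_cast
    ring
  rw [h2]
  have h3 : 2 * u * (u ^ ((m:ℝ) - 1) * Real.exp (-u ^ 2))
      = 2 * (u ^ m * Real.exp (-u ^ 2)) := by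
    have : (u:ℝ) * u ^ ((m:ℝ) - 1) = u ^ m := by
      have h4 := Real.rpow_add hu0 1 ((m:ℝ) - 1)
      rw [Real.rpow_one] at h4
      rw [← Real.rpow_natCast u m, ← h4]
      norm_num
    rw [← this]
    ring
  exact h3

lemma sum2 (v : ℝ) {r : ℝ} (hr : 0 ≤ r) :
    HasSum (fun m : ℕ => (2*v) ^ (m+1) / (Nat.factorial m : ℝ)
        * ∫ u in (0:ℝ)..r, u ^ m * Real.exp (-u ^ 2))
      (2 * v * Real.exp (v ^ 2) * ((∫ s in (0:ℝ)..v, Real.exp (-s ^ 2))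
        + ∫ s in (0:ℝ)..(r - v), Real.exp (-s ^ 2))) := by
  set F : ℕ → ℝ → ℝ := fun m u => (2*v) ^ (m+1) / (Nat.factorial m : ℝ)
      * (u ^ m * Real.exp (-u ^ 2)) with hF
  have hcont : ∀ m : ℕ, Continuous (F m) := by
    intro m
    fun_prop
  have hint : ∀ m : ℕ, Integrable (F m) (volume.restrict (Ioc 0 r)) := fun m =>
    (hcont m).integrableOn_Ioc
  have hbound : ∀ m : ℕ, (∫ u in Ioc (0:ℝ) r, ‖F m u‖)
      ≤ (|2*v| * r) ^ (m + 1) / (Nat.factorial m : ℝ) := by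
    intro m
    have hle : ∀ u ∈ Ioc (0:ℝ) r, ‖F m u‖ ≤ |2*v| ^ (m+1) * r ^ m / (Nat.factorial m : ℝ) := by
      intro u hu
      rw [hF]
      dsimp only
      rw [norm_mul, norm_div, norm_mul]
      simp only [norm_pow, Real.norm_eq_abs, Nat.abs_cast]
      have h1 : |u| ^ m ≤ r ^ m := by
        refine pow_le_pow_left₀ (abs_nonneg u) ?_ m
        rw [abs_of_pos hu.1]; exact hu.2
      have h2 : |Real.exp (-u ^ 2)| ≤ 1 := by
        rw [abs_of_pos (Real.exp_pos _)]
        exact Real.exp_le_one_iff.2 (neg_nonpos.2 (sq_nonneg u))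
      calc |2*v| ^ (m+1) / (Nat.factorial m : ℝ) * (|u| ^ m * |Real.exp (-u^2)|)
          ≤ |2*v| ^ (m+1) / (Nat.factorial m : ℝ) * (r ^ m * 1) := by
            refine mul_le_mul_of_nonneg_left ?_ (by positivity)
            exact mul_le_mul h1 h2 (abs_nonneg _) (by positivity)
        _ = |2*v| ^ (m+1) * r ^ m / (Nat.factorial m : ℝ) := by ring
    have := setIntegral_mono_on ((hint m).norm)
      (integrableOn_const (by rw [Real.volume_Ioc]; exact ENNReal.ofReal_ne_top))
      measurableSet_Ioc hle
    refine this.trans ?_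
    rw [setIntegral_const, measureReal_def, Real.volume_Ioc, smul_eq_mul, ENNReal.toReal_ofReal (by linarith)]
    rw [mul_pow]
    rw [show (r - 0) * (|2*v| ^ (m+1) * r ^ m / (Nat.factorial m : ℝ))
      = |2*v| ^ (m+1) * (r ^ m * r) / (Nat.factorial m : ℝ) by ring, ← pow_succ]
  have hsum : Summable fun m : ℕ => ∫ u in Ioc (0:ℝ) r, ‖F m u‖ := by
    refine Summable.of_nonneg_of_le (fun m => integral_nonneg fun u => norm_nonneg _)
      hbound ?_
    have := Real.summable_pow_div_factorial (|2*v| * r)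
    exact (this.mul_left (|2*v| * r)).congr fun m => by rw [pow_succ]; ring
  have hkey := hasSum_integral_of_summable_integral_norm hint hsum
  have htsum : ∀ u : ℝ, (∑' m : ℕ, F m u) = 2 * v * Real.exp (v ^ 2)
      * Real.exp (-(u - v) ^ 2) := by
    intro u
    have h5 : ∀ m : ℕ, F m u = (2 * v) * Real.exp (-u ^ 2)
        * ((2 * v * u) ^ m / (Nat.factorial m : ℝ)) := by
      intro m
      rw [hF]
      dsimp only
      rw [mul_pow, pow_succ]
      ring
    rw [tsum_congr h5, tsum_mul_left, expTsum, mul_assoc, ← Real.exp_add,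
      show -u ^ 2 + 2 * v * u = v ^ 2 + -(u - v) ^ 2 by ring, Real.exp_add]
    ring
  have hval : (∫ u in Ioc (0:ℝ) r, ∑' m : ℕ, F m u)
      = 2 * v * Real.exp (v ^ 2) * ((∫ s in (0:ℝ)..v, Real.exp (-s ^ 2))
        + ∫ s in (0:ℝ)..(r - v), Real.exp (-s ^ 2)) := by
    rw [setIntegral_congr_fun measurableSet_Ioc (fun u _ => htsum u),
      ← intervalIntegral.integral_of_le hr, intervalIntegral.integral_const_mul]
    congr 1
    rw [intervalIntegral.integral_comp_sub_right (fun s => Real.exp (-s ^ 2)) v, zero_sub]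
    have hc : Continuous fun s : ℝ => Real.exp (-s ^ 2) := by fun_prop
    rw [← intervalIntegral.integral_add_adjacent_intervals
      (hc.intervalIntegrable (-v) 0) (hc.intervalIntegrable 0 (r - v))]
    congr 1
    have h9 := intervalIntegral.integral_comp_neg (a := (0:ℝ)) (b := v)
      (fun s => Real.exp (-s ^ 2))
    simp only [neg_neg, neg_zero] at h9
    rw [← h9]
    refine intervalIntegral.integral_congr fun x _ => ?_
    rw [neg_sq]

  rw [← hval]
  refine hkey.congr_fun fun m => ?_
  rw [hF, intervalIntegral.integral_of_le hr]
  dsimp only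
  rw [integral_const_mul]

/-- The generating function of the `F_{n,d}(λ)`. -/
theorem tsum_Fnd (d : ℕ) (hd : 1 ≤ d) (l z : ℝ) (hz : |z| < 1 / Real.sqrt d) :
    ∑' n : ℕ, Fnd d n l * z ^ n =
      1 + z * Real.sqrt d / (1 - z * Real.sqrt d) *
          Real.exp (-l ^ 2 * (1 - 2 * z * Real.sqrt d) / (2 * d)) +
        Real.sqrt Real.pi / Real.sqrt 2 * z * |l| * Real.exp (z ^ 2 * l ^ 2 / 2) *
          (myErf (z * |l| / Real.sqrt 2) +
            myErf ((1 - z * Real.sqrt d) * |l| / Real.sqrt (2 * d))) := by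
  have hd0 : (0:ℝ) < d := by exact_mod_cast Nat.lt_of_lt_of_le Nat.zero_lt_one hd
  set s := Real.sqrt d with hs_def
  have hs0 : 0 < s := Real.sqrt_pos.2 hd0
  set w := z * s with hw_def
  have hw : |w| < 1 := by
    rw [hw_def, abs_mul, abs_of_pos hs0]
    calc |z| * s < 1 / s * s := by exact mul_lt_mul_of_pos_right hz hs0
      _ = 1 := by field_simp
  have h1w : 0 < 1 - w := by
    have := (abs_lt.1 hw).2
    linarith
  set a := l ^ 2 / (2 * (d:ℝ)) with ha_def
  have ha : 0 ≤ a := by positivity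
  have hb : l ^ 2 / (d:ℝ) = 2 * a := by
    rw [ha_def]; field_simp
  set r := Real.sqrt a with hr_def
  have hr : 0 ≤ r := Real.sqrt_nonneg _
  set v := w * r with hv_def
  have hsqrt2 : (0:ℝ) < Real.sqrt 2 := Real.sqrt_pos.2 (by norm_num)
  have hsqrt2d : Real.sqrt (2 * d) = Real.sqrt 2 * s := Real.sqrt_mul (by norm_num) _
  have hrl : r = |l| / Real.sqrt (2 * d) := by
    rw [hr_def, ha_def, show l ^ 2 = |l| ^ 2 by rw [sq_abs],
      Real.sqrt_div (by positivity) _, Real.sqrt_sq_eq_abs, abs_abs]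
  have hv : v = z * |l| / Real.sqrt 2 := by
    rw [hv_def, hrl, hw_def, hsqrt2d]
    field_simp
  -- the term identity
  have hterm : ∀ m : ℕ, Fnd d (m+1) l * z ^ (m+1)
      = Real.exp a * (w ^ (m+1) / (Nat.factorial m : ℝ)
          * ∫ t in Ioi (2*a), t ^ m * Real.exp (-t))
        + (2*v) ^ (m+1) / (Nat.factorial m : ℝ)
          * ∫ u in (0:ℝ)..r, u ^ m * Real.exp (-u ^ 2) := by
    intro m
    have hGamma : Real.Gamma ((m+1 : ℕ) : ℝ) = (Nat.factorial m : ℝ) := by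
      push_cast
      exact Real.Gamma_nat_eq_factorial m
    have hI1 : (∫ t in Ioi (l ^ 2 / (d:ℝ)), t ^ (((m+1 : ℕ) : ℝ) - 1) * Real.exp (-t))
        = ∫ t in Ioi (2*a), t ^ m * Real.exp (-t) := by
      rw [hb]
      refine setIntegral_congr_fun measurableSet_Ioi fun t _ => ?_
      have : ((m+1 : ℕ) : ℝ) - 1 = (m : ℝ) := by push_cast; ring
      rw [this, Real.rpow_natCast]
    have hI2 : (∫ t in (0:ℝ)..a, t ^ (((m+1 : ℕ) : ℝ) / 2 - 1)
          * Real.exp (-t))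
        = 2 * ∫ u in (0:ℝ)..r, u ^ m * Real.exp (-u ^ 2) := by
      have hcast : ((m+1 : ℕ) : ℝ) = (m:ℝ) + 1 := by push_cast; ring
      rw [hcast, hr_def]
      exact subst_sq ha m
    have hrpow : a ^ (((m+1 : ℕ) : ℝ) / 2) = r ^ (m+1) := by
      rw [hr_def, Real.sqrt_eq_rpow, ← Real.rpow_natCast (a ^ ((1:ℝ)/2)) (m+1),
        ← Real.rpow_mul ha]
      congr 1
      push_cast
      ring
    rw [Fnd, if_neg (Nat.succ_ne_zero m), hGamma]
    rw [← ha_def, hI1, hI2, hrpow, Nat.add_sub_cancel]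
    have hfac : ((Nat.factorial m : ℝ)) ≠ 0 := by positivity
    rw [hw_def, hv_def, hw_def]
    field_simp
    ring
  -- the two sums
  have hA := (sum1 hw (show (0:ℝ) ≤ 2*a by positivity)).mul_left (Real.exp a)
  have hB := sum2 v hr
  have hAB := hA.add hB
  have hsplit : HasSum (fun m : ℕ => Fnd d (m+1) l * z ^ (m+1))
      (Real.exp a * (w / (1 - w) * Real.exp (-((1 - w) * (2*a))))
        + 2 * v * Real.exp (v ^ 2) * ((∫ t in (0:ℝ)..v, Real.exp (-t ^ 2))
          + ∫ t in (0:ℝ)..(r - v), Real.exp (-t ^ 2))) := by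
    refine hAB.congr_fun fun m => ?_
    rw [hterm m]
  have hsummable : Summable (fun n : ℕ => Fnd d n l * z ^ n) := by
    have := hsplit.summable
    exact (summable_nat_add_iff 1).1 this
  rw [Summable.tsum_eq_zero_add hsummable, hsplit.tsum_eq]
  have h0 : Fnd d 0 l * z ^ 0 = 1 := by simp [Fnd]
  rw [h0]
  -- final algebra
  have eA : Real.exp a * (w / (1 - w) * Real.exp (-((1 - w) * (2*a))))
      = w / (1 - w) * Real.exp (-l ^ 2 * (1 - 2 * w) / (2 * d)) := by
    rw [mul_comm (Real.exp a), mul_assoc, ← Real.exp_add]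
    congr 2
    rw [ha_def]
    field_simp
    ring
  have eB : 2 * v * Real.exp (v ^ 2) * ((∫ t in (0:ℝ)..v, Real.exp (-t ^ 2))
        + ∫ t in (0:ℝ)..(r - v), Real.exp (-t ^ 2))
      = Real.sqrt Real.pi / Real.sqrt 2 * z * |l| * Real.exp (z ^ 2 * l ^ 2 / 2) *
          (myErf (z * |l| / Real.sqrt 2) + myErf ((1 - w) * |l| / Real.sqrt (2 * d))) := by
    have hpi : (0:ℝ) < Real.sqrt Real.pi := Real.sqrt_pos.2 Real.pi_pos
    have harg1 : z * |l| / Real.sqrt 2 = v := hv.symm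
    have harg2 : (1 - w) * |l| / Real.sqrt (2 * d) = r - v := by
      rw [hv_def, hrl]
      ring
    have hexp : z ^ 2 * l ^ 2 / 2 = v ^ 2 := by
      rw [hv]
      rw [div_pow, mul_pow, sq_abs]
      norm_num [Real.sq_sqrt]
    rw [harg1, harg2, hexp, myErf, myErf]
    have hzl : z * |l| = Real.sqrt 2 * v := by
      rw [hv]
      field_simp
    rw [show Real.sqrt Real.pi / Real.sqrt 2 * z * |l| =
      Real.sqrt Real.pi / Real.sqrt 2 * (z * |l|) by ring, hzl]
    field_simp
  rw [eA, eB, hw_def]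
  ring
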